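/- Let G be a non-abelian finite 2-group admitting an Iwasawa structure (A,t) of level s, and suppose the strength m of G (the maximum m with G/G^(2^m) abelian) is strictly greater than s, with s ≥ 2. Then G also admits an Iwasawa structure of level m. -/

import Mathlib

/-- An Iwasawa structure of level `s` on a group `G`. -/
def IsIwasawaStructure {G : Type*} [Group G] (A : Subgroup G) (t : G) (s : ℕ) : Prop :=
  A.Normal ∧ (∀ a ∈ A, ∀ b ∈ A, a * b = b * a) ∧
    Subgroup.closure ((A : Set G) ∪ {t}) = ⊤ ∧
    ∀ a ∈ A, t * a * t⁻¹ = a ^ (1 + 2 ^ s)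

/-- The subgroup of `G` generated by all `n`-th powers. -/
def powSubgroup (G : Type*) [Group G] (n : ℕ) : Subgroup G :=
  Subgroup.closure {x : G | ∃ g : G, g ^ n = x}

/-- Let `G` be a non-abelian finite 2-group with an Iwasawa structure `(A, t)` of level
`s ≥ 2`, and let `m` be the strength of `G`, i.e. `G / G ^ (2 ^ m)` is abelian but
`G / G ^ (2 ^ (m + 1))` is not.  If `m > s`, then `G` also admits an Iwasawa structure
of level `m`. -/
private lemma odd_inv_mod (n : ℤ) (hn : Odd n) (d : ℕ) : ∃ w : ℤ, n * w ≡ 1 [ZMOD (2^d)] := by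
  induction d with
  | zero => exact ⟨1, by simp [Int.ModEq, Int.emod_emod_of_dvd]⟩
  | succ d ih =>
    obtain ⟨w, hw⟩ := ih
    obtain ⟨c, hc⟩ := (Int.modEq_iff_dvd.mp hw)
    obtain ⟨e, he⟩ := hn
    refine ⟨w + 2^d * c, Int.ModEq.symm (Int.modEq_iff_dvd.mpr ⟨c * e, ?_⟩)⟩
    have h2 : (2:ℤ)^(d+1) = 2^d * 2 := by ring
    rw [h2]
    linear_combination (-1 : ℤ) * hc + 2^d * c * he

private lemma pow_one_add_modEq (s n : ℕ) :
    ((1 + 2^s : ℤ))^n ≡ 1 + 2^s * n [ZMOD (2^(2*s))] := by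
  induction n with
  | zero => simp
  | succ n ih =>
    have h1 : ((1 + 2^s : ℤ))^(n+1) = (1+2^s)^n * (1+2^s) := by ring
    rw [h1]
    calc ((1 + 2^s : ℤ))^n * (1+2^s) ≡ (1 + 2^s*n) * (1+2^s) [ZMOD (2^(2*s))] :=
          ih.mul_right _
      _ ≡ 1 + 2^s * (n+1) [ZMOD (2^(2*s))] := by
          exact Int.ModEq.symm (Int.modEq_iff_dvd.mpr ⟨(n:ℤ), by push_cast; ring⟩)

private lemma two_pow_dvd_of_odd_mul (k : ℕ) (c y : ℤ) (hc : Odd c) (h : 2^k ∣ c * y) :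
    2^k ∣ y := by
  obtain ⟨w, hw⟩ := odd_inv_mod c hc k
  have h1 : (2:ℤ)^k ∣ 1 - c*w := Int.ModEq.dvd hw
  have h2 : y = w*(c*y) + (1 - c*w)*y := by ring
  rw [h2]
  exact dvd_add (Dvd.dvd.mul_left h w) (h1.mul_right y)

private lemma powSubgroup_normal (G : Type*) [Group G] (n : ℕ) : (powSubgroup G n).Normal := by
  constructor
  intro x hx g
  refine Subgroup.closure_induction (p := fun y _ => g * y * g⁻¹ ∈ powSubgroup G n)
    ?_ ?_ ?_ ?_ hx
  · rintro z ⟨w, rfl⟩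
    exact Subgroup.subset_closure ⟨g*w*g⁻¹, by rw [conj_pow]⟩
  · simpa using (powSubgroup G n).one_mem
  · intro z w _ _ hz hw
    have h : g*(z*w)*g⁻¹ = (g*z*g⁻¹)*(g*w*g⁻¹) := by group
    rw [h]; exact Subgroup.mul_mem _ hz hw
  · intro z _ hz
    have h : g*z⁻¹*g⁻¹ = (g*z*g⁻¹)⁻¹ := by group
    rw [h]; exact Subgroup.inv_mem _ hz

open scoped commutatorElement

set_option maxHeartbeats 2000000 in
theorem exists_isIwasawaStructure_of_strength {G : Type*} [Group G] [Finite G]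
    (hG : IsPGroup 2 G) (hna : ¬ ∀ a b : G, a * b = b * a)
    (A : Subgroup G) (t : G) (s m : ℕ) (hs : 2 ≤ s) (hsm : s < m)
    (h : IsIwasawaStructure A t s)
    (habel : commutator G ≤ powSubgroup G (2 ^ m))
    (hmax : ¬ commutator G ≤ powSubgroup G (2 ^ (m + 1))) :
    ∃ (A' : Subgroup G) (t' : G), IsIwasawaStructure A' t' m := by
  classical
  obtain ⟨hAnorm, hAcomm, hAclos, hAconj⟩ := h
  haveI : Fact (Nat.Prime 2) := ⟨Nat.prime_two⟩
  obtain ⟨E0, hE0⟩ := hG.exists_card_eq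
  have hM : ∀ g : G, g ^ (2^E0) = 1 := fun g => by rw [← hE0]; exact pow_card_eq_one'
  have hE0pos : 1 ≤ E0 := by
    by_contra hE
    have hc1 : Nat.card G = 1 := by
      rw [hE0]; have : E0 = 0 := by omega
      simp [this]
    have hsub : Subsingleton G := (Nat.card_eq_one_iff_unique.mp hc1).1
    exact hna (fun a b => Subsingleton.elim _ _)
  set r := 1 + 2^s with hr
  have hr_odd : Odd r := by
    have h2 : Even (2^s) := (Nat.even_pow).mpr ⟨even_two, by omega⟩
    simpa [add_comm] using h2.add_one
  set v := r ^ (Nat.totient (2^E0) - 1) with hv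
  have hv_odd : Odd v := hr_odd.pow
  have hrv : r * v ≡ 1 [MOD 2^E0] := by
    have hco : Nat.Coprime r (2^E0) :=
      Nat.Coprime.pow_right _ (hr_odd.coprime_two_right)
    have htp : 0 < Nat.totient (2^E0) := Nat.totient_pos.mpr (pow_pos two_pos E0)
    have hrv' : r * v = r ^ (Nat.totient (2^E0)) := by
      rw [hv, ← pow_succ']
      congr 1; omega
    rw [hrv']; exact Nat.ModEq.pow_totient hco
  have horddvd : ∀ g : G, orderOf g ∣ 2^E0 := fun g => orderOf_dvd_of_pow_eq_one (hM g)
  have hpow_mod : ∀ (g:G) (x y : ℕ), x ≡ y [MOD 2^E0] → g^x = g^y := fun g x y hxy =>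
    pow_eq_pow_iff_modEq.mpr (hxy.of_dvd (horddvd g))
  have hzpow_mod : ∀ (g:G) (x y : ℤ), x ≡ y [ZMOD ((2^E0 : ℕ) : ℤ)] → g^x = g^y :=
    fun g x y hxy =>
    zpow_eq_zpow_iff_modEq.mpr (hxy.of_dvd (Int.natCast_dvd_natCast.mpr (horddvd g)))
  have hconj : ∀ a ∈ A, t * a * t⁻¹ = a ^ r := hAconj
  have hconjA : ∀ (g : G), ∀ a ∈ A, g * a * g⁻¹ ∈ A := fun g a ha => hAnorm.conj_mem a ha g
  have hconj' : ∀ a ∈ A, t⁻¹ * a * t = a ^ v := by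
    intro a ha
    have h1 : t * a^v * t⁻¹ = a^(v * r) := by
      rw [hconj _ (A.pow_mem ha v), ← pow_mul]
    have h2 : a^(v*r) = a := by
      have := hpow_mod a (v*r) 1 (by rw [mul_comm]; exact hrv)
      simpa using this
    have h3 : t * a^v * t⁻¹ = a := by rw [h1, h2]
    calc t⁻¹ * a * t = t⁻¹ * (t * a^v * t⁻¹) * t := by rw [h3]
      _ = a^v := by group
  have E3 : ∀ (n:ℕ), ∀ a ∈ A, t^n * a * (t^n)⁻¹ = a ^ (r^n) := by
    intro n
    induction n with
    | zero => intro a _; simp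
    | succ n ih =>
      intro a ha
      have h1 : t^(n+1) * a * (t^(n+1))⁻¹ = t * (t^n * a * (t^n)⁻¹) * t⁻¹ := by
        rw [pow_succ']; group
      rw [h1, ih a ha, hconj _ (A.pow_mem ha _), ← pow_mul, ← pow_succ]
  have E4 : ∀ (n:ℕ), ∀ a ∈ A, (t⁻¹)^n * a * ((t⁻¹)^n)⁻¹ = a ^ (v^n) := by
    intro n
    induction n with
    | zero => intro a _; simp
    | succ n ih =>
      intro a ha
      have h1 : (t⁻¹)^(n+1) * a * ((t⁻¹)^(n+1))⁻¹ = t⁻¹ * ((t⁻¹)^n * a * ((t⁻¹)^n)⁻¹) * t := by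
        rw [pow_succ']; group
      rw [h1, ih a ha, hconj' _ (A.pow_mem ha _), ← pow_mul, ← pow_succ]
  set ε : ℤ → ℕ := fun I => r ^ I.toNat * v ^ (-I).toNat with hε
  have hε_odd : ∀ I, Odd (ε I) := fun I => (hr_odd.pow).mul (hv_odd.pow)
  have E5 : ∀ (I:ℤ), ∀ a ∈ A, t^I * a * (t^I)⁻¹ = a ^ (ε I) := by
    intro I a ha
    rcases le_or_gt 0 I with hI | hI
    · have h1 : t^I = t^(I.toNat) := by rw [← zpow_natCast, Int.toNat_of_nonneg hI]
      have h2 : (-I).toNat = 0 := by omega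
      rw [h1, hε]; simp only [h2, pow_zero, mul_one]
      exact E3 _ a ha
    · have h1 : t^I = (t⁻¹)^((-I).toNat) := by
        have h0 : (((-I).toNat : ℕ) : ℤ) = -I := by omega
        calc t^I = (t^(((-I).toNat : ℕ) : ℤ))⁻¹ := by rw [h0, ← zpow_neg, neg_neg]
          _ = (t^((-I).toNat : ℕ))⁻¹ := by rw [zpow_natCast]
          _ = (t⁻¹)^((-I).toNat) := (inv_pow _ _).symm
      have h2 : I.toNat = 0 := by omega
      rw [h1, hε]; simp only [h2, pow_zero, one_mul]
      exact E4 _ a ha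
  have hdecomp : ∀ g : G, ∃ a ∈ A, ∃ I : ℤ, g = a * t^I := by
    intro g
    have hg : g ∈ Subgroup.closure ((A : Set G) ∪ {t}) := by
      rw [hAclos]; exact Subgroup.mem_top g
    refine Subgroup.closure_induction (p := fun x _ => ∃ a ∈ A, ∃ I : ℤ, x = a * t^I)
      ?_ ?_ ?_ ?_ hg
    · rintro x (hx | hx)
      · exact ⟨x, hx, 0, by simp⟩
      · exact ⟨1, A.one_mem, 1, by simp [Set.mem_singleton_iff.mp hx]⟩
    · exact ⟨1, A.one_mem, 0, by simp⟩
    · rintro x y _ _ ⟨a, ha, I, rfl⟩ ⟨b, hb, J, rfl⟩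
      exact ⟨a * (t^I * b * (t^I)⁻¹), A.mul_mem ha (hconjA _ b hb), I + J, by
        rw [zpow_add]; group⟩
    · rintro x _ ⟨a, ha, I, rfl⟩
      exact ⟨t^(-I) * a⁻¹ * (t^(-I))⁻¹, hconjA _ _ (A.inv_mem ha), -I, by group⟩
  have hpow : ∀ (k:ℕ) (a : G), a ∈ A → ∀ (I:ℤ),
      ∃ c ∈ A, (a * t^I)^((2:ℕ)^k) = c^((2:ℕ)^k) * t^((((2:ℕ)^k : ℕ) : ℤ) * I) := by
    intro k
    induction k with
    | zero =>
      intro a ha I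
      exact ⟨a, ha, by simp⟩
    | succ k ih =>
      intro a ha I
      obtain ⟨c, hc, hck⟩ := ih a ha I
      set J : ℤ := (((2:ℕ)^k : ℕ) : ℤ) * I with hJ
      have hc' : t^J * c * (t^J)⁻¹ = c ^ (ε J) := E5 J c hc
      obtain ⟨u, hu⟩ := hε_odd J
      have hy : 1 + ε J = 2*(u+1) := by omega
      refine ⟨c^(u+1), A.pow_mem hc (u+1), ?_⟩
      have h2 : (a*t^I)^(2^(k+1)) = ((a*t^I)^(2^k))^2 := by
        rw [← pow_mul]; congr 1
      rw [h2, hck]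
      have h3 : (c^(2^k) * t^J)^2 = c^(2^k) * (t^J * c^(2^k) * (t^J)⁻¹) * t^(J+J) := by
        rw [pow_two, zpow_add]; group
      have h4 : t^J * c^(2^k) * (t^J)⁻¹ = (c ^ (ε J))^(2^k) := by
        rw [← conj_pow, hc']
      have h5 : c^(2^k) * (c ^ (ε J))^(2^k) = (c^(u+1))^(2^(k+1)) := by
        rw [← pow_mul, ← pow_add, ← pow_mul]
        congr 1
        have : 2^k + ε J * 2^k = (1 + ε J) * 2^k := by ring
        rw [this, hy]; ring
      have h6 : t^(J+J) = t^((((2:ℕ)^(k+1) : ℕ) : ℤ) * I) := by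
        congr 1
        rw [hJ]; push_cast; ring
      rw [h3, h4, h5, h6]
  have hext : ∀ x ∈ powSubgroup G (2^m),
      ∃ c ∈ A, ∃ I : ℤ, x = c^((2:ℕ)^m) * t^((((2:ℕ)^m : ℕ) : ℤ) * I) := by
    have hS : powSubgroup G (2^m) ≤ {
        carrier := {x | ∃ c ∈ A, ∃ I : ℤ, x = c^((2:ℕ)^m) * t^((((2:ℕ)^m : ℕ) : ℤ) * I)}
        one_mem' := ⟨1, A.one_mem, 0, by simp⟩
        mul_mem' := by
          rintro x y ⟨c, hc, I, rfl⟩ ⟨d, hd, J, rfl⟩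
          set T : ℤ := (((2:ℕ)^m : ℕ) : ℤ) with hT
          set d' := t^(T*I) * d * (t^(T*I))⁻¹ with hd'
          refine ⟨c * d', A.mul_mem hc (hconjA _ d hd), I + J, ?_⟩
          have hcomm : Commute c d' := by
            have := hAcomm c hc d' (hconjA _ d hd)
            exact this
          calc c^(2^m) * t^(T*I) * (d^(2^m) * t^(T*J))
              = c^(2^m) * (t^(T*I) * d^(2^m) * (t^(T*I))⁻¹) * t^(T*I + T*J) := by
                rw [zpow_add]; group
            _ = c^(2^m) * d'^(2^m) * t^(T*(I+J)) := by
                rw [hd', conj_pow, mul_add]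
            _ = (c * d')^(2^m) * t^(T*(I+J)) := by rw [hcomm.mul_pow]
        inv_mem' := by
          rintro x ⟨c, hc, I, rfl⟩
          set T : ℤ := (((2:ℕ)^m : ℕ) : ℤ) with hT
          refine ⟨t^(-(T*I)) * c⁻¹ * (t^(-(T*I)))⁻¹, hconjA _ _ (A.inv_mem hc), -I, ?_⟩
          have hTn : T * (-I) = -(T*I) := by ring
          rw [hTn, conj_pow, inv_pow]
          group } := by
      rw [powSubgroup]
      refine (Subgroup.closure_le _).mpr ?_
      rintro y ⟨g, rfl⟩
      obtain ⟨a, ha, I, rfl⟩ := hdecomp g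
      obtain ⟨c, hc, hck⟩ := hpow m a ha I
      exact ⟨c, hc, I, hck⟩
    intro x hx
    exact hS hx
  have hin_comm : ∀ a ∈ A, a^(2^s) ∈ commutator G := by
    intro a ha
    have h1 : ⁅t, a⁆ = a^(2^s) := by
      rw [commutatorElement_def, hconj a ha, hr, pow_add, pow_one]
      group
    rw [commutator_def, ← h1]
    exact Subgroup.commutator_mem_commutator (Subgroup.mem_top t) (Subgroup.mem_top a)
  have hins : ∀ a ∈ A, a^(2^s) ∈ powSubgroup G (2^m) := fun a ha => habel (hin_comm a ha)
  have hAexp : ∀ a ∈ A, a^(2^(2*s)) = 1 := by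
    have hbase : ∀ a ∈ A, ∃ c ∈ A, a^(2^(2*s)) = c^(2^(2*s+1)) := by
      intro a ha
      obtain ⟨c, hc, I, hacI⟩ := hext _ (hins a ha)
      set x := t^((((2:ℕ)^m : ℕ) : ℤ) * I) with hx
      have hxA : x ∈ A := by
        have hxe : x = (c^((2:ℕ)^m))⁻¹ * a^(2^s) := by rw [hacI]; group
        rw [hxe]; exact A.mul_mem (A.inv_mem (A.pow_mem hc _)) (A.pow_mem ha _)
      have hxt : t * x * t⁻¹ = x := by
        rw [hx]
        group
      have hxs : x^(2^s) = 1 := by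
        have h1 : x ^ r = x := by rw [← hconj x hxA, hxt]
        have h2 : x^r = x * x^(2^s) := by rw [hr, pow_add, pow_one]
        have h3 : x * x^(2^s) = x * 1 := by rw [mul_one, ← h2, h1]
        exact mul_left_cancel h3
      have hcomm : Commute (c^((2:ℕ)^m)) x := hAcomm _ (A.pow_mem hc _) x hxA
      refine ⟨c^(2^(m-s-1)), A.pow_mem hc _, ?_⟩
      have h7 : 2^(2*s) = 2^s * 2^s := by rw [← pow_add]; congr 1; omega
      have h8 : a^(2^(2*s)) = (a^(2^s))^(2^s) := by rw [h7, pow_mul]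
      rw [h8, hacI, hcomm.mul_pow, hxs, mul_one, ← pow_mul, ← pow_mul]
      congr 1
      rw [← pow_add, ← pow_add]
      congr 1
      omega
    have hiter : ∀ (n:ℕ), ∀ a ∈ A, ∃ c ∈ A, a^(2^(2*s)) = c^(2^(2*s+n)) := by
      intro n
      induction n with
      | zero => intro a ha; exact ⟨a, ha, by rw [Nat.add_zero]⟩
      | succ n ih =>
        intro a ha
        obtain ⟨c, hc, hcn⟩ := ih a ha
        obtain ⟨d, hd, hdn⟩ := hbase c hc
        refine ⟨d, hd, ?_⟩
        rw [hcn]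
        have h1 : c^(2^(2*s+n)) = (c^(2^(2*s)))^(2^n) := by
          rw [← pow_mul, ← pow_add]
        rw [h1, hdn, ← pow_mul, ← pow_add]
        congr 2
        omega
    intro a ha
    obtain ⟨c, hc, hcE⟩ := hiter E0 a ha
    rw [hcE]
    have h1 : 2^(2*s+E0) = 2^E0 * 2^(2*s) := by rw [← pow_add]; congr 1; omega
    rw [h1, pow_mul, hM c, one_pow]
  have hQ : ∀ (k:ℕ), ∀ a ∈ A, ∃ c ∈ A, ∃ I:ℤ,
      a^(2^s) = c^(2^(m+k)) * t^((((2:ℕ)^m : ℕ) : ℤ) * I) := by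
    intro k
    induction k with
    | zero =>
      intro a ha
      obtain ⟨c, hc, I, hI⟩ := hext _ (hins a ha)
      exact ⟨c, hc, I, by simpa using hI⟩
    | succ k ih =>
      intro a ha
      obtain ⟨c, hc, I, hI⟩ := ih a ha
      obtain ⟨d, hd, I', hI'⟩ := hext _ (hins c hc)
      set T : ℤ := (((2:ℕ)^m : ℕ) : ℤ) with hT
      set x' := t^(T * I') with hx'
      have hx'A : x' ∈ A := by
        have hxe : x' = (d^((2:ℕ)^m))⁻¹ * c^(2^s) := by rw [hI']; group
        rw [hxe]; exact A.mul_mem (A.inv_mem (A.pow_mem hd _)) (A.pow_mem hc _)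
      have hcomm : Commute (d^((2:ℕ)^m)) x' := hAcomm _ (A.pow_mem hd _) x' hx'A
      have h1 : c^(2^(m+k)) = (c^(2^s))^(2^(m+k-s)) := by
        rw [← pow_mul, ← pow_add]
        congr 2
        omega
      have h2 : x'^((2:ℕ)^(m+k-s)) = t^(T * (I' * (((2:ℕ)^(m+k-s) : ℕ) : ℤ))) := by
        rw [hx', ← zpow_natCast (t^(T*I')), ← zpow_mul]
        congr 1
        push_cast
        ring
      have h3 : (d^((2:ℕ)^m))^((2:ℕ)^(m+k-s)) = (d^(2^(m-s-1)))^(2^(m+(k+1))) := by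
        rw [← pow_mul, ← pow_mul, ← pow_add, ← pow_add]
        congr 2
        omega
      refine ⟨d^(2^(m-s-1)), A.pow_mem hd _, I' * (((2:ℕ)^(m+k-s) : ℕ) : ℤ) + I, ?_⟩
      rw [hI, h1, hI', hcomm.mul_pow, h2, h3, mul_assoc, ← zpow_add, mul_add]
  have hB : ∀ a ∈ A, ∃ I:ℤ, a^(2^s) = t^((((2:ℕ)^m : ℕ) : ℤ) * I) := by
    intro a ha
    obtain ⟨c, hc, I, hI⟩ := hQ (2*s) a ha
    have h1 : c^(2^(m+2*s)) = 1 := by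
      have h2 : 2^(m+2*s) = 2^(2*s) * 2^m := by rw [← pow_add]; congr 1; omega
      rw [h2, pow_mul, hAexp c hc, one_pow]
    exact ⟨I, by rw [hI, h1, one_mul]⟩
  have hcommut : ∀ a ∈ A, ⁅t, a⁆ = a^(2^s) := by
    intro a ha
    rw [commutatorElement_def, hconj a ha, hr, pow_add, pow_one]
    group
  have hmemtop : ∀ g : G, g ∈ Subgroup.closure ((A : Set G) ∪ {t}) := by
    intro g; rw [hAclos]; exact Subgroup.mem_top g
  have ha₀ : ∃ a ∈ A, a^(2^s) ∉ powSubgroup G (2^(m+1)) := by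
    by_contra hcon
    push_neg at hcon
    apply hmax
    rw [commutator_def, Subgroup.commutator_le]
    have hP'norm := powSubgroup_normal G (2^(m+1))
    have PA : ∀ g : G, ∀ a ∈ A, ⁅g, a⁆ ∈ powSubgroup G (2^(m+1)) := by
      intro g a ha
      refine Subgroup.closure_induction
        (p := fun x _ => ⁅x, a⁆ ∈ powSubgroup G (2^(m+1))) ?_ ?_ ?_ ?_ (hmemtop g)
      · rintro z (hz | hz)
        · have : ⁅z, a⁆ = 1 := by
            rw [commutatorElement_def, hAcomm z hz a ha]; group
          rw [this]; exact Subgroup.one_mem _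
        · rw [Set.mem_singleton_iff.mp hz, hcommut a ha]
          exact hcon a ha
      · show ⁅(1:G), a⁆ ∈ powSubgroup G (2^(m+1))
        have hone1 : ⁅(1:G), a⁆ = 1 := by rw [commutatorElement_def]; group
        rw [hone1]; exact Subgroup.one_mem _
      · intro x y _ _ hx hy
        have h : ⁅x*y, a⁆ = (x * ⁅y,a⁆ * x⁻¹) * ⁅x,a⁆ := by
          simp only [commutatorElement_def]; group
        rw [h]; exact Subgroup.mul_mem _ (hP'norm.conj_mem _ hy x) hx
      · intro x _ hx
        have h : ⁅x⁻¹, a⁆ = x⁻¹ * ⁅x,a⁆⁻¹ * x := by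
          simp only [commutatorElement_def]; group
        rw [h]
        have := hP'norm.conj_mem _ (Subgroup.inv_mem _ hx) x⁻¹
        simpa using this
    have PT : ∀ h : G, ⁅t, h⁆ ∈ powSubgroup G (2^(m+1)) := by
      intro h
      refine Subgroup.closure_induction
        (p := fun x _ => ⁅t, x⁆ ∈ powSubgroup G (2^(m+1))) ?_ ?_ ?_ ?_ (hmemtop h)
      · rintro z (hz | hz)
        · rw [hcommut z hz]; exact hcon z hz
        · rw [Set.mem_singleton_iff.mp hz]
          have : ⁅t, t⁆ = 1 := by rw [commutatorElement_def]; group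
          rw [this]; exact Subgroup.one_mem _
      · show ⁅t, (1:G)⁆ ∈ powSubgroup G (2^(m+1))
        have hone1 : ⁅t, (1:G)⁆ = 1 := by rw [commutatorElement_def]; group
        rw [hone1]; exact Subgroup.one_mem _
      · intro x y _ _ hx hy
        have h : ⁅t, x*y⁆ = ⁅t,x⁆ * (x * ⁅t,y⁆ * x⁻¹) := by
          simp only [commutatorElement_def]; group
        rw [h]; exact Subgroup.mul_mem _ hx (hP'norm.conj_mem _ hy x)
      · intro x _ hx
        have h : ⁅t, x⁻¹⁆ = x⁻¹ * ⁅t,x⁆⁻¹ * x := by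
          simp only [commutatorElement_def]; group
        rw [h]
        have := hP'norm.conj_mem _ (Subgroup.inv_mem _ hx) x⁻¹
        simpa using this
    intro g _ h _
    refine Subgroup.closure_induction
      (p := fun x _ => ⁅x, h⁆ ∈ powSubgroup G (2^(m+1))) ?_ ?_ ?_ ?_ (hmemtop g)
    · rintro z (hz | hz)
      · have he : ⁅z, h⁆ = ⁅h, z⁆⁻¹ := by simp only [commutatorElement_def]; group
        rw [he]; exact Subgroup.inv_mem _ (PA h z hz)
      · rw [Set.mem_singleton_iff.mp hz]; exact PT h
    · show ⁅(1:G), h⁆ ∈ powSubgroup G (2^(m+1))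
      have hone1 : ⁅(1:G), h⁆ = 1 := by rw [commutatorElement_def]; group
      rw [hone1]; exact Subgroup.one_mem _
    · intro x y _ _ hx hy
      have he : ⁅x*y, h⁆ = (x * ⁅y,h⁆ * x⁻¹) * ⁅x,h⁆ := by
        simp only [commutatorElement_def]; group
      rw [he]; exact Subgroup.mul_mem _ (hP'norm.conj_mem _ hy x) hx
    · intro x _ hx
      have he : ⁅x⁻¹, h⁆ = x⁻¹ * ⁅x,h⁆⁻¹ * x := by
        simp only [commutatorElement_def]; group
      rw [he]
      have := hP'norm.conj_mem _ (Subgroup.inv_mem _ hx) x⁻¹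
      simpa using this
  obtain ⟨a₀, ha₀A, ha₀P⟩ := ha₀
  set T0 : ℤ := (((2:ℕ)^m : ℕ) : ℤ) with hT0
  obtain ⟨I₀, hI₀⟩ := hB a₀ ha₀A
  set τ : G := t^T0 with hτ
  have hI₀' : a₀^(2^s) = τ^I₀ := by rw [hI₀, hτ, ← zpow_mul]
  have hI₀odd : Odd I₀ := by
    rcases Int.even_or_odd I₀ with he | ho
    · exfalso
      obtain ⟨I₁, hI₁⟩ := he
      apply ha₀P
      have ht2 : a₀^(2^s) = (t^((2:ℕ)^(m+1)))^(I₁) := by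
        rw [hI₀, ← zpow_natCast t ((2:ℕ)^(m+1)), ← zpow_mul]
        congr 1
        rw [hI₁, hT0]
        push_cast
        ring
      rw [ht2]
      have hmem : t^((2:ℕ)^(m+1)) ∈ powSubgroup G (2^(m+1)) :=
        Subgroup.subset_closure (show t^((2:ℕ)^(m+1)) ∈ {x : G | ∃ g : G, g ^ (2^(m+1)) = x}
          from ⟨t, rfl⟩)
      exact Subgroup.zpow_mem _ hmem I₁
    · exact ho
  set B₀ : G := a₀^(2^s) with hB₀
  have hB₀ne : B₀ ≠ 1 := by
    intro hone
    apply ha₀P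
    rw [hone]
    exact Subgroup.one_mem _
  have hB₀s : B₀^(2^s) = 1 := by
    rw [hB₀, ← pow_mul, ← pow_add]
    have : s + s = 2*s := by omega
    rw [this]
    exact hAexp a₀ ha₀A
  obtain ⟨ν, hνle, hν⟩ := (Nat.dvd_prime_pow Nat.prime_two).mp (horddvd B₀)
  have hνs : ν ≤ s := by
    have hd : orderOf B₀ ∣ 2^s := orderOf_dvd_of_pow_eq_one hB₀s
    rw [hν] at hd
    exact (Nat.pow_dvd_pow_iff_le_right (by norm_num)).mp hd
  obtain ⟨d₀, hd₀le, hd₀⟩ := (Nat.dvd_prime_pow Nat.prime_two).mp (horddvd a₀)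
  have hd₀s : s < d₀ := by
    by_contra hle
    push_neg at hle
    apply hB₀ne
    have hdvd : orderOf a₀ ∣ 2^s := by rw [hd₀]; exact pow_dvd_pow 2 hle
    exact orderOf_dvd_iff_pow_eq_one.mp hdvd
  have hd₀eq : d₀ = s + ν := by
    have hup : a₀^(2^(s+ν)) = 1 := by
      rw [pow_add, pow_mul, ← hB₀, ← hν]
      exact pow_orderOf_eq_one B₀
    have h2 : (2:ℕ)^d₀ ∣ 2^(s+ν) := by rw [← hd₀]; exact orderOf_dvd_of_pow_eq_one hup
    have h3 : B₀^(2^(d₀-s)) = 1 := by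
      have he : B₀^(2^(d₀-s)) = a₀^(2^d₀) := by
        rw [hB₀, ← pow_mul, ← pow_add]
        congr 2
        omega
      rw [he, ← hd₀]
      exact pow_orderOf_eq_one a₀
    have h4 : (2:ℕ)^ν ∣ 2^(d₀ - s) := by rw [← hν]; exact orderOf_dvd_of_pow_eq_one h3
    have h5 := (Nat.pow_dvd_pow_iff_le_right (by norm_num : 1 < 2)).mp h2
    have h6 := (Nat.pow_dvd_pow_iff_le_right (by norm_num : 1 < 2)).mp h4
    omega
  have hsνE : s + ν ≤ E0 := by omega
  obtain ⟨dτ, hdτle, hdτ⟩ := (Nat.dvd_prime_pow Nat.prime_two).mp (horddvd τ)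
  obtain ⟨J₀, hJ₀⟩ := odd_inv_mod I₀ hI₀odd dτ
  have hτB : τ = B₀^J₀ := by
    have h1 : τ^(I₀ * J₀) = τ^(1:ℤ) := by
      apply zpow_eq_zpow_iff_modEq.mpr
      rw [hdτ]
      exact_mod_cast hJ₀
    rw [← zpow_one τ, ← h1, zpow_mul, ← hI₀']
  have hτord : orderOf τ = 2^ν := by
    have h1 : orderOf B₀ ∣ orderOf τ := by
      apply orderOf_dvd_of_pow_eq_one
      rw [hI₀', ← zpow_natCast (τ^I₀), ← zpow_mul, mul_comm, zpow_mul, zpow_natCast,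
        pow_orderOf_eq_one, one_zpow]
    have h2 : orderOf τ ∣ orderOf B₀ := by
      apply orderOf_dvd_of_pow_eq_one
      rw [hτB, ← zpow_natCast (B₀^J₀), ← zpow_mul, mul_comm, zpow_mul, zpow_natCast,
        pow_orderOf_eq_one, one_zpow]
    rw [← hν]
    exact Nat.dvd_antisymm h2 h1
  have hs2 : s + ν ≤ 2*s := by omega
  have hrZ : ∀ n:ℕ, ((r:ℕ):ℤ)^n ≡ 1 + 2^s*n [ZMOD ((2:ℤ)^(s+ν))] := by
    intro n
    have h1 : ((1+2^s:ℤ))^n ≡ 1 + 2^s*n [ZMOD ((2:ℤ)^(2*s))] := pow_one_add_modEq s n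
    have h2 : ((2:ℤ)^(s+ν)) ∣ (2:ℤ)^(2*s) := pow_dvd_pow 2 hs2
    have h3 := h1.of_dvd h2
    have hrc : ((r:ℕ):ℤ) = 1+2^s := by rw [hr]; push_cast; ring
    rw [hrc]
    exact h3
  have hrvZ : ((r:ℕ):ℤ) * ((v:ℕ):ℤ) ≡ 1 [ZMOD ((2:ℤ)^(s+ν))] := by
    have h0 : r * v ≡ 1 [MOD 2^(s+ν)] := hrv.of_dvd (pow_dvd_pow 2 hsνE)
    have h1 := Int.natCast_modEq_iff.mpr h0
    push_cast at h1
    exact h1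
  have hvZ : ∀ n:ℕ, ((v:ℕ):ℤ)^n ≡ 1 - 2^s*n [ZMOD ((2:ℤ)^(s+ν))] := by
    intro n
    have h1 : ((r:ℕ):ℤ)^n * ((v:ℕ):ℤ)^n ≡ 1 [ZMOD ((2:ℤ)^(s+ν))] := by
      rw [← mul_pow]
      calc (((r:ℕ):ℤ) * ((v:ℕ):ℤ))^n ≡ 1^n [ZMOD ((2:ℤ)^(s+ν))] := hrvZ.pow n
        _ = 1 := one_pow n
    have h2 := hrZ n
    have hEpow : (2:ℤ)^s * 2^s = 2^(s+ν) * 2^(s-ν) := by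
      rw [← pow_add, ← pow_add]
      congr 1
      omega
    have h3 : (1+2^s*(n:ℤ)) * ((v:ℕ):ℤ)^n ≡ (1+2^s*n) * (1-2^s*n) [ZMOD ((2:ℤ)^(s+ν))] := by
      calc (1+2^s*(n:ℤ)) * ((v:ℕ):ℤ)^n
          ≡ ((r:ℕ):ℤ)^n * ((v:ℕ):ℤ)^n [ZMOD ((2:ℤ)^(s+ν))] := (h2.symm).mul_right _
        _ ≡ 1 [ZMOD ((2:ℤ)^(s+ν))] := h1
        _ ≡ (1+2^s*n) * (1-2^s*n) [ZMOD ((2:ℤ)^(s+ν))] := by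
            refine Int.ModEq.symm (Int.modEq_iff_dvd.mpr ⟨(2:ℤ)^(s-ν) * n^2, ?_⟩)
            linear_combination ((n:ℤ)^2) * hEpow
    have h4 : (2:ℤ)^(s+ν) ∣ (1+2^s*(n:ℤ)) * ((1-2^s*n) - ((v:ℕ):ℤ)^n) := by
      have h5 := Int.ModEq.dvd h3
      have h6 : (1+2^s*(n:ℤ)) * ((1-2^s*n) - ((v:ℕ):ℤ)^n)
          = (1+2^s*n) * (1-2^s*n) - (1+2^s*(n:ℤ)) * ((v:ℕ):ℤ)^n := by ring
      rw [h6]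
      exact h5
    have hodd : Odd ((1:ℤ)+2^s*n) := by
      have hsp : (2:ℤ)^s = 2*2^(s-1) := by
        rw [← pow_succ']
        congr 1
        omega
      exact ⟨2^(s-1)*n, by rw [hsp]; ring⟩
    have h7 := two_pow_dvd_of_odd_mul (s+ν) _ _ hodd h4
    exact Int.modEq_iff_dvd.mpr h7
  have hce : ∀ I:ℤ, ((ε I : ℕ) : ℤ) ≡ 1 + 2^s * I [ZMOD ((2:ℤ)^(s+ν))] := by
    intro I
    rcases le_or_gt 0 I with hI | hI
    · have h2 : (-I).toNat = 0 := by omega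
      have hei : ((ε I : ℕ):ℤ) = ((r:ℕ):ℤ)^(I.toNat) := by
        simp only [hε, h2, pow_zero, mul_one]
        push_cast
        ring
      rw [hei]
      have h3 := hrZ I.toNat
      rw [show ((I.toNat : ℕ):ℤ) = I from by omega] at h3
      exact h3
    · have h2 : I.toNat = 0 := by omega
      have hei : ((ε I : ℕ):ℤ) = ((v:ℕ):ℤ)^((-I).toNat) := by
        simp only [hε, h2, pow_zero, one_mul]
        push_cast
        ring
      rw [hei]
      have h3 := hvZ (-I).toNat
      rw [show (((-I).toNat : ℕ):ℤ) = -I from by omega] at h3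
      have h4 : (1:ℤ) - 2^s * (-I) = 1 + 2^s * I := by ring
      rw [h4] at h3
      exact h3
  have hcw : ∀ I:ℤ, ∃ w:ℤ, ((ε I : ℕ):ℤ) = 1 + 2^s * w ∧ w ≡ I [ZMOD ((2:ℤ)^ν)] := by
    intro I
    obtain ⟨u, hu⟩ := Int.modEq_iff_dvd.mp (hce I)
    have hsplit : (2:ℤ)^(s+ν) = 2^s*2^ν := by rw [← pow_add]
    refine ⟨I - 2^ν * u, ?_, ?_⟩
    · linear_combination (-1:ℤ)*hu - u*hsplit
    · exact Int.ModEq.symm (Int.modEq_iff_dvd.mpr ⟨-u, by ring⟩)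
  have hBτ : ∀ a ∈ A, ∃ Ia:ℤ, a^(2^s) = τ^Ia := by
    intro a ha
    obtain ⟨Ia, hIa⟩ := hB a ha
    exact ⟨Ia, by rw [hIa, hτ, ← zpow_mul]⟩
  have hpow2s : ∀ c : G, c^(2^s) = 1 → c^((2:ℤ)^s) = 1 := by
    intro c hc
    have hc2 : ((2:ℤ)^s) = (((2:ℕ)^s : ℕ) : ℤ) := by push_cast; ring
    rw [hc2, zpow_natCast, hc]
  have hcommΩ : ∀ c ∈ A, c^(2^s) = 1 → ∀ I:ℤ, t^I * c * (t^I)⁻¹ = c := by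
    intro c hc hc1 I
    rw [E5 I c hc]
    obtain ⟨w, hw1, _⟩ := hcw I
    calc c^(ε I) = c^(((ε I : ℕ):ℤ)) := (zpow_natCast c (ε I)).symm
      _ = c^((1:ℤ) + 2^s * w) := by rw [hw1]
      _ = c * (c^((2:ℤ)^s))^w := by rw [zpow_add, zpow_one, zpow_mul]
      _ = c := by rw [hpow2s c hc1, one_zpow, mul_one]
  have hbconj : ∀ b ∈ A, ∀ I:ℤ, b * t^I * b⁻¹ = b^((1:ℤ) - (ε I:ℕ)) * t^I := by
    intro b hb I
    have h3 : t^I * b⁻¹ * (t^I)⁻¹ = b^(-((ε I:ℕ):ℤ)) := by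
      rw [E5 I b⁻¹ (A.inv_mem hb), inv_pow, ← zpow_natCast, ← zpow_neg]
    calc b * t^I * b⁻¹ = b * (t^I * b⁻¹ * (t^I)⁻¹) * t^I := by group
      _ = b * b^(-((ε I:ℕ):ℤ)) * t^I := by rw [h3]
      _ = b^((1:ℤ) - (ε I:ℕ)) * t^I := by
          rw [sub_eq_add_neg, zpow_add, zpow_one]
  set A' : Subgroup G := {
    carrier := {x | ∃ c, (c ∈ A ∧ c^(2^s) = 1) ∧ ∃ I:ℤ, x = c * t^I}
    one_mem' := ⟨1, ⟨A.one_mem, one_pow _⟩, 0, by simp⟩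
    mul_mem' := by
      rintro x y ⟨c,⟨hc,hc1⟩,I,rfl⟩ ⟨d,⟨hd,hd1⟩,J,rfl⟩
      refine ⟨c*d, ⟨A.mul_mem hc hd, ?_⟩, I+J, ?_⟩
      · rw [(show Commute c d from hAcomm c hc d hd).mul_pow, hc1, hd1, one_mul]
      · have hcd : t^I * d = d * t^I := by
          have h := hcommΩ d hd hd1 I
          calc t^I*d = (t^I*d*(t^I)⁻¹)*t^I := by group
            _ = d * t^I := by rw [h]
        have h1 : c * t^I * (d * t^J) = c * (t^I * d) * t^J := by group
        rw [h1, hcd, zpow_add]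
        group
    inv_mem' := by
      rintro x ⟨c,⟨hc,hc1⟩,I,rfl⟩
      refine ⟨c⁻¹, ⟨A.inv_mem hc, by rw [inv_pow, hc1, inv_one]⟩, -I, ?_⟩
      have hinvc : (c⁻¹)^(2^s) = 1 := by rw [inv_pow, hc1, inv_one]
      have hcd : t^(-I) * c⁻¹ = c⁻¹ * t^(-I) := by
        have h := hcommΩ c⁻¹ (A.inv_mem hc) hinvc (-I)
        calc t^(-I)*c⁻¹ = (t^(-I)*c⁻¹*(t^(-I))⁻¹)*t^(-I) := by group
          _ = c⁻¹ * t^(-I) := by rw [h]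
      rw [mul_inv_rev, ← zpow_neg, hcd] } with hA'
  have hA'mem : ∀ x, x ∈ A' ↔ ∃ c, (c ∈ A ∧ c^(2^s) = 1) ∧ ∃ I:ℤ, x = c * t^I := by
    intro x; rfl
  have htA' : t ∈ A' := (hA'mem t).mpr ⟨1, ⟨A.one_mem, one_pow _⟩, 1, by simp⟩
  have hconjA' : ∀ b ∈ A, ∀ x ∈ A', b * x * b⁻¹ ∈ A' := by
    intro b hb x hx
    obtain ⟨c, ⟨hc, hc1⟩, I, rfl⟩ := (hA'mem _).mp hx
    obtain ⟨w, hw1, hw2⟩ := hcw I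
    obtain ⟨Ib, hIb⟩ := hBτ b hb
    have h5 : b^((1:ℤ) - (ε I:ℕ)) = τ^(Ib * (-w)) := by
      have h4 : (1:ℤ) - (ε I:ℕ) = (((2:ℕ)^s : ℕ):ℤ) * (-w) := by
        push_cast
        linear_combination (-1:ℤ)*hw1
      rw [h4, zpow_mul, zpow_natCast, hIb, ← zpow_mul]
    have hbc : b*c = c*b := hAcomm b hb c hc
    have hstep : b * (c * t^I) * b⁻¹ = c * (b * t^I * b⁻¹) := by
      calc b * (c * t^I) * b⁻¹ = (b*c) * t^I * b⁻¹ := by group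
        _ = (c*b) * t^I * b⁻¹ := by rw [hbc]
        _ = c * (b * t^I * b⁻¹) := by group
    refine (hA'mem _).mpr ⟨c, ⟨hc, hc1⟩, T0 * (Ib * (-w)) + I, ?_⟩
    rw [hstep, hbconj b hb I, h5, hτ, ← zpow_mul, ← mul_assoc, zpow_add, mul_assoc]
  have hA'norm : A'.Normal := by
    constructor
    intro x hx g
    obtain ⟨c, ⟨hc, hc1⟩, I, rfl⟩ := (hA'mem _).mp hx
    obtain ⟨b, hb, K, rfl⟩ := hdecomp g
    have h1 : t^K * (c * t^I) * (t^K)⁻¹ = c * t^I := by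
      have h2 := hcommΩ c hc hc1 K
      calc t^K * (c*t^I) * (t^K)⁻¹ = (t^K*c*(t^K)⁻¹) * (t^K*t^I*(t^K)⁻¹) := by group
        _ = c * (t^K*t^I*(t^K)⁻¹) := by rw [h2]
        _ = c * t^I := by congr 1; group
    have h3 : (b * t^K) * (c * t^I) * (b * t^K)⁻¹ = b * (t^K * (c * t^I) * (t^K)⁻¹) * b⁻¹ := by
      group
    rw [h3, h1]
    exact hconjA' b hb _ hx
  have hA'comm : ∀ x ∈ A', ∀ y ∈ A', x * y = y * x := by
    intro x hx y hy
    obtain ⟨c, ⟨hc, hc1⟩, I, rfl⟩ := (hA'mem _).mp hx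
    obtain ⟨d, ⟨hd, hd1⟩, J, rfl⟩ := (hA'mem _).mp hy
    have key : ∀ p q : G, p ∈ A → p^(2^s) = 1 → q ∈ A → q^(2^s) = 1 → ∀ (U V : ℤ),
        (p * t^U) * (q * t^V) = (p*q) * t^(U+V) := by
      intro p q hp hp1 hq hq1 U V
      have hcd : t^U * q = q * t^U := by
        have h := hcommΩ q hq hq1 U
        calc t^U*q = (t^U*q*(t^U)⁻¹)*t^U := by group
          _ = q * t^U := by rw [h]
      have h1 : p * t^U * (q * t^V) = p * (t^U * q) * t^V := by group
      rw [h1, hcd, zpow_add]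
      group
    rw [key c d hc hc1 hd hd1 I J, key d c hd hd1 hc hc1 J I,
      hAcomm c hc d hd, add_comm]
  obtain ⟨k₁, hk₁⟩ := odd_inv_mod I₀ hI₀odd s
  have hk₁odd : Odd k₁ := by
    rcases Int.even_or_odd k₁ with he | ho
    · exfalso
      have h2 : (2:ℤ) ∣ (2:ℤ)^s := dvd_pow_self 2 (by omega)
      have h3 : (2:ℤ) ∣ 1 - I₀*k₁ := dvd_trans h2 (Int.ModEq.dvd hk₁)
      have h4 : Even (I₀*k₁) := he.mul_left I₀
      have h5 : Odd (1 - I₀*k₁) := (Odd.sub_even odd_one h4)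
      obtain ⟨q, hq⟩ := h3
      obtain ⟨p, hp⟩ := h5
      omega
    · exact ho
  set kk : ℤ := -k₁ with hkk
  have hkkodd : Odd kk := hk₁odd.neg
  have hI₀kk : I₀ * kk ≡ -1 [ZMOD (2:ℤ)^s] := by
    have := hk₁.neg
    rw [hkk]
    calc I₀ * (-k₁) = -(I₀ * k₁) := by ring
      _ ≡ -1 [ZMOD (2:ℤ)^s] := this
  set t' : G := a₀^kk with ht'
  have ht'A : t' ∈ A := A.zpow_mem ha₀A kk
  obtain ⟨k₂, hk₂⟩ := odd_inv_mod kk hkkodd d₀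
  have ha₀gen : t'^k₂ = a₀ := by
    rw [ht', ← zpow_mul]
    have h1 : a₀^(kk*k₂) = a₀^(1:ℤ) := by
      apply zpow_eq_zpow_iff_modEq.mpr
      rw [hd₀]
      exact_mod_cast hk₂
    rw [h1, zpow_one]
  have hclos' : Subgroup.closure ((A' : Set G) ∪ {t'}) = ⊤ := by
    have hle : Subgroup.closure ((A:Set G) ∪ {t}) ≤ Subgroup.closure ((A':Set G) ∪ {t'}) := by
      refine (Subgroup.closure_le _).mpr ?_
      rintro x (hx | hx)
      · obtain ⟨Ia, hIa⟩ := hBτ x hx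
        set E : ℤ := J₀ * Ia with hE
        have hxE : x^(2^s) = (a₀^E)^((2:ℕ)^s) := by
          rw [hIa, hτB, ← zpow_mul, ← zpow_natCast (a₀^E), ← zpow_mul, hB₀,
            ← zpow_natCast a₀ (2^s), ← zpow_mul]
          congr 1
          push_cast
          ring
        have hcA : x * (a₀^E)⁻¹ ∈ A := A.mul_mem hx (A.inv_mem (A.zpow_mem ha₀A E))
        have hcm : Commute x (a₀^E)⁻¹ :=
          hAcomm x hx _ (A.inv_mem (A.zpow_mem ha₀A E))
        have hc2 : (x * (a₀^E)⁻¹)^(2^s) = 1 := by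
          rw [hcm.mul_pow, inv_pow, hxE]
          simp
        have hxc : x = (x * (a₀^E)⁻¹) * a₀^E := (inv_mul_cancel_right x _).symm
        have hcA' : x * (a₀^E)⁻¹ ∈ Subgroup.closure ((A':Set G) ∪ {t'}) :=
          Subgroup.subset_closure (Set.mem_union_left _ ((hA'mem _).mpr ⟨x * (a₀^E)⁻¹, ⟨hcA, hc2⟩, 0, by simp⟩))
        have ha₀mem : a₀ ∈ Subgroup.closure ((A':Set G) ∪ {t'}) := by
          rw [← ha₀gen]
          exact Subgroup.zpow_mem _ (Subgroup.subset_closure (Set.mem_union_right _ (Set.mem_singleton t'))) k₂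
        rw [hxc]
        exact Subgroup.mul_mem _ hcA' (Subgroup.zpow_mem _ ha₀mem E)
      · rw [Set.mem_singleton_iff.mp hx]
        exact Subgroup.subset_closure (Set.mem_union_left _ htA')
    rw [eq_top_iff, ← hAclos]
    exact hle
  have hact : ∀ x ∈ A', t' * x * t'⁻¹ = x^(1+2^m) := by
    intro x hx
    obtain ⟨c, ⟨hc, hc1⟩, I, rfl⟩ := (hA'mem _).mp hx
    obtain ⟨w, hw1, hw2⟩ := hcw I
    have h6 : t'^((1:ℤ)-(ε I:ℕ)) = τ^(I₀ * (-(kk * w))) := by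
      rw [ht', ← zpow_mul]
      have h7 : kk * ((1:ℤ)-(ε I:ℕ)) = (((2:ℕ)^s : ℕ):ℤ) * (-(kk*w)) := by
        push_cast
        linear_combination (-kk)*hw1
      rw [h7, zpow_mul, zpow_natCast]
      rw [show a₀^((2:ℕ)^s) = τ^I₀ from hI₀', ← zpow_mul]
    have h8 : τ^(I₀ * (-(kk * w))) = τ^I := by
      apply zpow_eq_zpow_iff_modEq.mpr
      rw [hτord]
      have h9 : I₀ * kk ≡ -1 [ZMOD (2:ℤ)^ν] := hI₀kk.of_dvd (pow_dvd_pow 2 hνs)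
      have h10 : (I₀*kk) * (-w) ≡ (-1) * (-w) [ZMOD (2:ℤ)^ν] := h9.mul_right _
      have h11 : I₀ * (-(kk*w)) ≡ w [ZMOD (2:ℤ)^ν] := by
        have e1 : I₀ * (-(kk*w)) = (I₀*kk)*(-w) := by ring
        have e2 : (-1:ℤ) * (-w) = w := by ring
        rw [e1]
        simpa using h10
      have h12 := h11.trans hw2
      exact_mod_cast h12
    have hbc : t'*c = c*t' := hAcomm t' ht'A c hc
    have hstep : t' * (c * t^I) * t'⁻¹ = c * (t' * t^I * t'⁻¹) := by
      calc t' * (c * t^I) * t'⁻¹ = (t'*c) * t^I * t'⁻¹ := by group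
        _ = (c*t') * t^I * t'⁻¹ := by rw [hbc]
        _ = c * (t' * t^I * t'⁻¹) := by group
    have hLHS : t' * (c * t^I) * t'⁻¹ = c * t^(T0 * I + I) := by
      rw [hstep, hbconj t' ht'A I, h6, h8, hτ, ← zpow_mul, ← zpow_add]
    have hcomm_ct : Commute c (t^I) := by
      have h := hcommΩ c hc hc1 I
      show c * t^I = t^I * c
      calc c * t^I = (t^I*c*(t^I)⁻¹) * t^I := by rw [h]
        _ = t^I * c := by group
    have hRHS : (c * t^I)^(1+2^m) = c * t^(T0 * I + I) := by
      rw [hcomm_ct.mul_pow]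
      have hcp : c^(1+2^m) = c := by
        rw [pow_add, pow_one]
        have h13 : (2:ℕ)^m = 2^s * 2^(m-s) := by
          rw [← pow_add]
          congr 1
          omega
        rw [h13, pow_mul, hc1, one_pow, mul_one]
      have htp : (t^I)^(1+2^m) = t^(T0 * I + I) := by
        rw [← zpow_natCast (t^I), ← zpow_mul]
        congr 1
        rw [hT0]
        push_cast
        ring
      rw [hcp, htp]
    rw [hLHS, hRHS]
  exact ⟨A', t', hA'norm, hA'comm, hclos', hact⟩
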